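/- Let S : [0,1] → ℝ^{n×n} be a smooth path of symmetric matrices, λ₀ ∈ (0,1), and let u ∈ C²([0,1],ℝⁿ) be a nonzero solution of u''(x) + λ₀² S(λ₀ x) u(x) = 0 with u(0) = 0 and u(1) = 0. Then u'(1) ≠ 0, and consequently the derivative at λ₀ of the function f(λ) = ∫₀¹ λ² ⟨S(λ x) u(x), u(x)⟩ dx satisfies f'(λ₀) = (1/λ₀)‖u'(1)‖² > 0; in particular, the quadratic form q̇_{λ₀}(u) = −f'(λ₀) is negative definite on the space of such solutions u. -/

import Mathlib

open Set RealInnerProductSpace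

noncomputable section

set_option maxHeartbeats 1000000

private lemma aux_bound_cfnd {c s M : ℝ} (hc0 : 0 ≤ c) (hc1 : c ≤ 1) (hs : |s| ≤ M) :
    |c * s| ≤ M := by
  rw [abs_mul]
  calc |c| * |s| ≤ 1 * M :=
        mul_le_mul (by rwa [abs_of_nonneg hc0]) hs (abs_nonneg _) zero_le_one
    _ = M := one_mul M

/-- Regularity and negative definiteness of the crossing form: if `u` is a nonzero `C²`
solution of `u'' + λ₀² S(λ₀ x) u = 0` on `[0,1]` with `u 0 = u 1 = 0`, then `u'(1) ≠ 0`, and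
the function `f(λ) = ∫₀¹ λ² ⟪S(λx) u(x), u(x)⟫ dx` is differentiable at `λ₀` with derivative
`f'(λ₀) = (1/λ₀) ‖u'(1)‖² > 0`; in particular `q̇_{λ₀}(u) = −f'(λ₀) < 0`. -/
theorem crossing_form_negative_definite {n : ℕ}
    (S : ℝ → (EuclideanSpace ℝ (Fin n) →L[ℝ] EuclideanSpace ℝ (Fin n)))
    (hS : ContDiffOn ℝ (⊤ : ℕ∞) S (Icc 0 1))
    (hsym : ∀ x ∈ Icc (0:ℝ) 1, IsSelfAdjoint (S x))
    (l₀ : ℝ) (hl₀ : l₀ ∈ Ioo (0:ℝ) 1)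
    (u : ℝ → EuclideanSpace ℝ (Fin n))
    (hu : ContDiffOn ℝ 2 u (Icc 0 1))
    (hode : ∀ x ∈ Icc (0:ℝ) 1,
      derivWithin (derivWithin u (Icc 0 1)) (Icc 0 1) x + (l₀ ^ 2) • S (l₀ * x) (u x) = 0)
    (hu0 : u 0 = 0) (hu1 : u 1 = 0)
    (hne : ∃ x ∈ Icc (0:ℝ) 1, u x ≠ 0) :
    derivWithin u (Icc 0 1) 1 ≠ 0 ∧
      HasDerivAt (fun l : ℝ => ∫ x in (0:ℝ)..1, l ^ 2 * ⟪S (l * x) (u x), u x⟫)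
        ((1 / l₀) * ‖derivWithin u (Icc 0 1) 1‖ ^ 2) l₀ ∧
      0 < (1 / l₀) * ‖derivWithin u (Icc 0 1) 1‖ ^ 2 := by
  obtain ⟨hl0, hl1⟩ := hl₀
  have hUD : UniqueDiffOn ℝ (Icc (0:ℝ) 1) := uniqueDiffOn_Icc one_pos
  set v := derivWithin u (Icc (0:ℝ) 1) with hv
  set w := derivWithin v (Icc (0:ℝ) 1) with hw
  have hucont : ContinuousOn u (Icc (0:ℝ) 1) := hu.continuousOn
  have hvCD : ContDiffOn ℝ 1 v (Icc (0:ℝ) 1) := hu.derivWithin hUD (by norm_num)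
  have hvcont : ContinuousOn v (Icc (0:ℝ) 1) := hvCD.continuousOn
  have hwcont : ContinuousOn w (Icc (0:ℝ) 1) :=
    hvCD.continuousOn_derivWithin hUD le_rfl
  have hDu : ∀ x ∈ Ioo (0:ℝ) 1, HasDerivAt u (v x) x := by
    intro x hx
    exact ((hu.differentiableOn (by norm_num) x (Ioo_subset_Icc_self hx)).hasDerivWithinAt).hasDerivAt
      (Icc_mem_nhds hx.1 hx.2)
  have hDv : ∀ x ∈ Ioo (0:ℝ) 1, HasDerivAt v (w x) x := by
    intro x hx
    exact ((hvCD.differentiableOn (by norm_num) x (Ioo_subset_Icc_self hx)).hasDerivWithinAt).hasDerivAt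
      (Icc_mem_nhds hx.1 hx.2)
  have hodeW : ∀ x ∈ Icc (0:ℝ) 1, w x = -((l₀^2) • S (l₀*x) (u x)) := fun x hx =>
    eq_neg_of_add_eq_zero_left (hode x hx)
  obtain ⟨C₁, hC₁⟩ := isCompact_Icc.exists_bound_of_continuousOn hS.continuousOn
  have hC₁0 : 0 ≤ C₁ := le_trans (norm_nonneg _) (hC₁ 0 ⟨le_rfl, zero_le_one⟩)
  have hmemI : ∀ x ∈ Icc (0:ℝ) 1, l₀ * x ∈ Icc (0:ℝ) 1 := by
    intro x hx
    exact ⟨mul_nonneg hl0.le hx.1, mul_le_one₀ hl1.le hx.1 hx.2⟩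
  -- Part 1: v 1 ≠ 0 via energy estimate
  have hv1ne : v 1 ≠ 0 := by
    intro hv1
    set C : ℝ := 1 + l₀^2 * C₁ with hC
    have hCpos : 0 < C := by positivity
    set E : ℝ → ℝ := fun x => ⟪u x, u x⟫ + ⟪v x, v x⟫ with hE
    set W : ℝ → ℝ := fun x => E x * Real.exp (C * x) with hW
    have hEcont : ContinuousOn E (Icc (0:ℝ) 1) :=
      (hucont.inner hucont).add (hvcont.inner hvcont)
    have hWcont : ContinuousOn W (Icc (0:ℝ) 1) :=
      hEcont.mul (Real.continuous_exp.comp (continuous_const.mul continuous_id)).continuousOn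
    have hWd : ∀ x ∈ Ioo (0:ℝ) 1, HasDerivAt W
        ((((⟪u x, v x⟫ + ⟪v x, u x⟫) + (⟪v x, w x⟫ + ⟪w x, v x⟫)) + C * E x) * Real.exp (C * x)) x := by
      intro x hx
      have hEx : HasDerivAt E ((⟪u x, v x⟫ + ⟪v x, u x⟫) + (⟪v x, w x⟫ + ⟪w x, v x⟫)) x :=
        ((hDu x hx).inner ℝ (hDu x hx)).add ((hDv x hx).inner ℝ (hDv x hx))
      have hex : HasDerivAt (fun y : ℝ => Real.exp (C * y)) (Real.exp (C * x) * C) x :=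
        (Real.hasDerivAt_exp (C * x)).comp x (by simpa using (hasDerivAt_id x).const_mul C)
      have := hEx.mul hex
      refine this.congr_deriv ?_
      ring
    have hWd0 : ∀ x ∈ Ioo (0:ℝ) 1, 0 ≤ (((⟪u x, v x⟫ + ⟪v x, u x⟫) + (⟪v x, w x⟫ + ⟪w x, v x⟫)) + C * E x) * Real.exp (C * x) := by
      intro x hx
      have hxI : x ∈ Icc (0:ℝ) 1 := Ioo_subset_Icc_self hx
      have h1 : ⟪v x, w x⟫ = -(l₀^2 * ⟪v x, S (l₀*x) (u x)⟫) := by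
        rw [hodeW x hxI]; rw [inner_neg_right, real_inner_smul_right]
      have h2 : |⟪v x, S (l₀*x) (u x)⟫| ≤ ‖v x‖ * (C₁ * ‖u x‖) := by
        refine (abs_real_inner_le_norm _ _).trans ?_
        have := ((S (l₀*x)).le_opNorm (u x)).trans
          (mul_le_mul_of_nonneg_right (hC₁ _ (hmemI x hxI)) (norm_nonneg _))
        exact mul_le_mul_of_nonneg_left this (norm_nonneg _)
      have h3 : |⟪u x, v x⟫| ≤ ‖u x‖ * ‖v x‖ := abs_real_inner_le_norm _ _
      have h4 : ⟪v x, u x⟫ = ⟪u x, v x⟫ := real_inner_comm _ _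
      have h5 : ⟪w x, v x⟫ = ⟪v x, w x⟫ := real_inner_comm _ _
      have h6 : ⟪u x, u x⟫ = ‖u x‖^2 := real_inner_self_eq_norm_sq _
      have h7 : ⟪v x, v x⟫ = ‖v x‖^2 := real_inner_self_eq_norm_sq _
      have hexp : 0 < Real.exp (C * x) := Real.exp_pos _
      have key : 0 ≤ ((⟪u x, v x⟫ + ⟪v x, u x⟫) + (⟪v x, w x⟫ + ⟪w x, v x⟫)) + C * E x := by
        rw [h4, h5, h1, hE]
        simp only [h6, h7, hC]
        have habs1 := abs_le.mp h2
        have habs2 := abs_le.mp h3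
        nlinarith [sq_nonneg (‖u x‖ - ‖v x‖), sq_nonneg (‖u x‖ + ‖v x‖), sq_nonneg l₀,
          mul_nonneg (mul_nonneg (sq_nonneg l₀) hC₁0) (sq_nonneg (‖u x‖ - ‖v x‖))]
      positivity
    have hmono : MonotoneOn W (Icc (0:ℝ) 1) := by
      apply monotoneOn_of_deriv_nonneg (convex_Icc 0 1) hWcont
      · rw [interior_Icc]
        exact fun x hx => (hWd x hx).differentiableAt.differentiableWithinAt
      · rw [interior_Icc]
        intro x hx
        rw [(hWd x hx).deriv]
        exact hWd0 x hx
    have hW1 : W 1 = 0 := by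
      simp [hW, hE, hu1, hv1]
    have hWz : ∀ x ∈ Icc (0:ℝ) 1, W x = 0 := by
      intro x hx
      have hle : W x ≤ W 1 := hmono hx ⟨zero_le_one, le_rfl⟩ hx.2
      have hge : 0 ≤ W x := by
        have hE0 : 0 ≤ E x := add_nonneg real_inner_self_nonneg real_inner_self_nonneg
        exact mul_nonneg hE0 (Real.exp_pos _).le
      linarith [hW1 ▸ hle]
    obtain ⟨x, hx, hux⟩ := hne
    apply hux
    have hEx0 : E x = 0 := by
      have hWx := hWz x hx
      have hexp : Real.exp (C * x) ≠ 0 := (Real.exp_pos _).ne'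
      have : E x * Real.exp (C * x) = 0 := hWx
      exact (mul_eq_zero.mp this).resolve_right hexp
    simp only [hE] at hEx0
    have h1 : ⟪u x, u x⟫ = 0 := by
      have h2 : (0:ℝ) ≤ ⟪u x, u x⟫ := real_inner_self_nonneg
      have h3 : (0:ℝ) ≤ ⟪v x, v x⟫ := real_inner_self_nonneg
      linarith
    exact inner_self_eq_zero.mp h1
  -- Part 3 (easy): positivity
  have hpos : 0 < (1 / l₀) * ‖v 1‖ ^ 2 := by
    have h1 : 0 < ‖v 1‖ := norm_pos_iff.mpr hv1ne
    positivity
  refine ⟨hv1ne, ?_, hpos⟩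
  -- Part 2: derivative of the parametrized integral
  set Sd := derivWithin S (Icc (0:ℝ) 1) with hSdd
  have hSdcont : ContinuousOn Sd (Icc (0:ℝ) 1) :=
    hS.continuousOn_derivWithin hUD (by exact_mod_cast le_top)
  have hDS : ∀ t ∈ Ioo (0:ℝ) 1, HasDerivAt S (Sd t) t := fun t ht =>
    ((hS.differentiableOn (by simp) t (Ioo_subset_Icc_self ht)).hasDerivWithinAt).hasDerivAt
      (Icc_mem_nhds ht.1 ht.2)
  obtain ⟨C₂, hC₂⟩ := isCompact_Icc.exists_bound_of_continuousOn hSdcont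
  have hC₂0 : 0 ≤ C₂ := le_trans (norm_nonneg _) (hC₂ 0 ⟨le_rfl, zero_le_one⟩)
  obtain ⟨C₃, hC₃⟩ := isCompact_Icc.exists_bound_of_continuousOn hucont
  have hC₃0 : 0 ≤ C₃ := le_trans (norm_nonneg _) (hC₃ 0 ⟨le_rfl, zero_le_one⟩)
  set ε : ℝ := min l₀ (1 - l₀) with hε
  have hεpos : 0 < ε := lt_min hl0 (by linarith)
  have hball : Metric.ball l₀ ε ⊆ Ioo (0:ℝ) 1 := by
    intro l hl
    rw [Metric.mem_ball, Real.dist_eq, abs_lt] at hl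
    constructor
    · have : -(min l₀ (1 - l₀)) < l - l₀ := hl.1
      have h2 : min l₀ (1 - l₀) ≤ l₀ := min_le_left _ _
      linarith
    · have h2 : min l₀ (1 - l₀) ≤ 1 - l₀ := min_le_right _ _
      linarith [hl.2]
  set F' : ℝ → ℝ → ℝ := fun l x =>
    2 * l * ⟪S (l * x) (u x), u x⟫ + l ^ 2 * x * ⟪Sd (l * x) (u x), u x⟫ with hF'
  have hIsub : uIoc (0:ℝ) 1 ⊆ Icc (0:ℝ) 1 := by
    rw [uIoc_of_le zero_le_one]; exact Ioc_subset_Icc_self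
  -- continuity in x for a parameter l ∈ [0,1]
  have hFcont : ∀ l ∈ Icc (0:ℝ) 1, ContinuousOn
      (fun x => l ^ 2 * ⟪S (l * x) (u x), u x⟫) (Icc (0:ℝ) 1) := by
    intro l hl
    have hmaps : MapsTo (fun x : ℝ => l * x) (Icc (0:ℝ) 1) (Icc (0:ℝ) 1) := by
      intro x hx
      exact ⟨mul_nonneg hl.1 hx.1, mul_le_one₀ hl.2 hx.1 hx.2⟩
    have hScomp : ContinuousOn (fun x : ℝ => S (l * x)) (Icc (0:ℝ) 1) :=
      hS.continuousOn.comp (continuous_const.mul continuous_id).continuousOn hmaps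
    exact continuousOn_const.mul ((hScomp.clm_apply hucont).inner hucont)
  have hF'cont : ContinuousOn (F' l₀) (Icc (0:ℝ) 1) := by
    have hmaps : MapsTo (fun x : ℝ => l₀ * x) (Icc (0:ℝ) 1) (Icc (0:ℝ) 1) := fun x hx => hmemI x hx
    have hScomp : ContinuousOn (fun x : ℝ => S (l₀ * x)) (Icc (0:ℝ) 1) :=
      hS.continuousOn.comp (continuous_const.mul continuous_id).continuousOn hmaps
    have hSdcomp : ContinuousOn (fun x : ℝ => Sd (l₀ * x)) (Icc (0:ℝ) 1) :=
      hSdcont.comp (continuous_const.mul continuous_id).continuousOn hmaps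
    exact (continuousOn_const.mul ((hScomp.clm_apply hucont).inner hucont)).add
      (((continuousOn_const.mul continuousOn_id).mul ((hSdcomp.clm_apply hucont).inner hucont)))
  have hl₀I : l₀ ∈ Icc (0:ℝ) 1 := ⟨hl0.le, hl1.le⟩
  have key := intervalIntegral.hasDerivAt_integral_of_dominated_loc_of_deriv_le
    (F := fun l x => l ^ 2 * ⟪S (l * x) (u x), u x⟫) (F' := F')
    (x₀ := l₀) (a := (0:ℝ)) (b := 1) (μ := MeasureTheory.volume)
    (bound := fun _ => 2 * C₁ * C₃ ^ 2 + C₂ * C₃ ^ 2) (Metric.ball_mem_nhds l₀ hεpos)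
    ?_ ?_ ?_ ?_ ?_ ?_
  · -- main goal: identify the integral of F' l₀ with (1/l₀) * ‖v 1‖²
    have hmapsL : MapsTo (fun x : ℝ => l₀ * x) (Icc (0:ℝ) 1) (Icc (0:ℝ) 1) := fun x hx => hmemI x hx
    have hScompL : ContinuousOn (fun x : ℝ => S (l₀ * x)) (Icc (0:ℝ) 1) :=
      hS.continuousOn.comp (continuous_const.mul continuous_id).continuousOn hmapsL
    have hSdcompL : ContinuousOn (fun x : ℝ => Sd (l₀ * x)) (Icc (0:ℝ) 1) :=
      hSdcont.comp (continuous_const.mul continuous_id).continuousOn hmapsL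
    set G : ℝ → ℝ := fun x => l₀ ^ 2 * ⟪S (l₀ * x) (u x), u x⟫ with hG
    set Gd : ℝ → ℝ := fun x =>
      l₀ ^ 3 * ⟪Sd (l₀ * x) (u x), u x⟫ + 2 * l₀ ^ 2 * ⟪S (l₀ * x) (u x), v x⟫ with hGd
    have hGcont : ContinuousOn G (Icc (0:ℝ) 1) :=
      continuousOn_const.mul ((hScompL.clm_apply hucont).inner hucont)
    have hGdcont : ContinuousOn Gd (Icc (0:ℝ) 1) :=
      (continuousOn_const.mul ((hSdcompL.clm_apply hucont).inner hucont)).add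
        (continuousOn_const.mul ((hScompL.clm_apply hucont).inner hvcont))
    have hDG : ∀ x ∈ Ioo (0:ℝ) 1, HasDerivAt G (Gd x) x := by
      intro x hx
      have hlx : l₀ * x ∈ Ioo (0:ℝ) 1 :=
        ⟨mul_pos hl0 hx.1, lt_of_le_of_lt (mul_le_of_le_one_right hl0.le hx.2.le) hl1⟩
      have hDmul : HasDerivAt (fun y : ℝ => l₀ * y) l₀ x := by
        simpa using (hasDerivAt_id x).const_mul l₀
      have hDSl : HasDerivAt (fun y : ℝ => S (l₀ * y)) (l₀ • Sd (l₀ * x)) x := by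
        have h := HasDerivAt.scomp (x := x) (hDS _ hlx) hDmul
        exact h
      have happ : HasDerivAt (fun y : ℝ => S (l₀ * y) (u y))
          ((l₀ • Sd (l₀ * x)) (u x) + S (l₀ * x) (v x)) x := hDSl.clm_apply (hDu x hx)
      have hinner := happ.inner ℝ (hDu x hx)
      have hfin := hinner.const_mul (l₀ ^ 2)
      refine hfin.congr_deriv ?_
      have hsymx : ⟪S (l₀ * x) (v x), u x⟫ = ⟪S (l₀ * x) (u x), v x⟫ := by
        have h := (hsym _ (hmemI x (Ioo_subset_Icc_self hx))).isSymmetric (v x) (u x)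
        simp only [ContinuousLinearMap.coe_coe] at h
        rw [h, real_inner_comm]
      simp only [hGd, inner_add_left, ContinuousLinearMap.coe_smul', Pi.smul_apply,
        real_inner_smul_left]
      rw [hsymx]
      ring
    -- integral identities via FTC
    have hintA : (∫ x in (0:ℝ)..1, (⟪w x, u x⟫ + ⟪v x, v x⟫)) = 0 := by
      have hcont : ContinuousOn (fun x => ⟪v x, u x⟫) (Icc (0:ℝ) 1) := hvcont.inner hucont
      have hderiv : ∀ x ∈ Ioo (0:ℝ) 1,
          HasDerivAt (fun x => ⟪v x, u x⟫) (⟪w x, u x⟫ + ⟪v x, v x⟫) x := by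
        intro x hx
        have h := (hDv x hx).inner ℝ (hDu x hx)
        refine h.congr_deriv ?_
        ring
      have hint : IntervalIntegrable (fun x => ⟪w x, u x⟫ + ⟪v x, v x⟫)
          MeasureTheory.volume 0 1 := by
        apply ContinuousOn.intervalIntegrable
        rw [uIcc_of_le zero_le_one]
        exact (hwcont.inner hucont).add (hvcont.inner hvcont)
      rw [intervalIntegral.integral_eq_sub_of_hasDerivAt_of_le zero_le_one hcont hderiv hint]
      simp [hu1, hu0]
    have hintB : (∫ x in (0:ℝ)..1, (G x + x * Gd x)) = 0 := by
      have hcont : ContinuousOn (fun x => x * G x) (Icc (0:ℝ) 1) := continuousOn_id.mul hGcont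
      have hderiv : ∀ x ∈ Ioo (0:ℝ) 1, HasDerivAt (fun x => x * G x) (G x + x * Gd x) x := by
        intro x hx
        have h := (hasDerivAt_id x).mul (hDG x hx)
        refine h.congr_deriv ?_
        simp only [id_eq]
        ring
      have hint : IntervalIntegrable (fun x => G x + x * Gd x) MeasureTheory.volume 0 1 := by
        apply ContinuousOn.intervalIntegrable
        rw [uIcc_of_le zero_le_one]
        exact hGcont.add (continuousOn_id.mul hGdcont)
      rw [intervalIntegral.integral_eq_sub_of_hasDerivAt_of_le zero_le_one hcont hderiv hint]
      simp [hG, hu1]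
    have hintC : (∫ x in (0:ℝ)..1, (⟪v x, v x⟫ + 2 * x * ⟪w x, v x⟫)) = ⟪v 1, v 1⟫ := by
      have hcont : ContinuousOn (fun x => x * ⟪v x, v x⟫) (Icc (0:ℝ) 1) :=
        continuousOn_id.mul (hvcont.inner hvcont)
      have hderiv : ∀ x ∈ Ioo (0:ℝ) 1,
          HasDerivAt (fun x => x * ⟪v x, v x⟫) (⟪v x, v x⟫ + 2 * x * ⟪w x, v x⟫) x := by
        intro x hx
        have h := (hasDerivAt_id x).mul ((hDv x hx).inner ℝ (hDv x hx))
        refine h.congr_deriv ?_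
        simp only [id_eq]
        rw [real_inner_comm (w x) (v x)]
        ring
      have hint : IntervalIntegrable (fun x => ⟪v x, v x⟫ + 2 * x * ⟪w x, v x⟫)
          MeasureTheory.volume 0 1 := by
        apply ContinuousOn.intervalIntegrable
        rw [uIcc_of_le zero_le_one]
        exact (hvcont.inner hvcont).add
          ((continuousOn_const.mul continuousOn_id).mul (hwcont.inner hvcont))
      rw [intervalIntegral.integral_eq_sub_of_hasDerivAt_of_le zero_le_one hcont hderiv hint]
      simp
    -- pointwise identity
    have hpt : ∀ x ∈ Icc (0:ℝ) 1, F' l₀ x =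
        (1 / l₀) * ((G x + x * Gd x) + (⟪v x, v x⟫ + 2 * x * ⟪w x, v x⟫)
          - (⟪w x, u x⟫ + ⟪v x, v x⟫)) := by
      intro x hxI
      have h1 : ⟪w x, u x⟫ = -(l₀ ^ 2 * ⟪S (l₀ * x) (u x), u x⟫) := by
        rw [hodeW x hxI, inner_neg_left, real_inner_smul_left]
      have h2 : ⟪w x, v x⟫ = -(l₀ ^ 2 * ⟪S (l₀ * x) (u x), v x⟫) := by
        rw [hodeW x hxI, inner_neg_left, real_inner_smul_left]
      simp only [hF', hG, hGd]
      rw [h1, h2]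
      field_simp
      ring
    -- integrability of the pieces
    have hiA : IntervalIntegrable (fun x => ⟪w x, u x⟫ + ⟪v x, v x⟫) MeasureTheory.volume 0 1 := by
      apply ContinuousOn.intervalIntegrable
      rw [uIcc_of_le zero_le_one]
      exact (hwcont.inner hucont).add (hvcont.inner hvcont)
    have hiB : IntervalIntegrable (fun x => G x + x * Gd x) MeasureTheory.volume 0 1 := by
      apply ContinuousOn.intervalIntegrable
      rw [uIcc_of_le zero_le_one]
      exact hGcont.add (continuousOn_id.mul hGdcont)
    have hiC : IntervalIntegrable (fun x => ⟪v x, v x⟫ + 2 * x * ⟪w x, v x⟫)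
        MeasureTheory.volume 0 1 := by
      apply ContinuousOn.intervalIntegrable
      rw [uIcc_of_le zero_le_one]
      exact (hvcont.inner hvcont).add
        ((continuousOn_const.mul continuousOn_id).mul (hwcont.inner hvcont))
    have hval : (∫ x in (0:ℝ)..1, F' l₀ x) = (1 / l₀) * ‖v 1‖ ^ 2 := by
      calc (∫ x in (0:ℝ)..1, F' l₀ x)
          = ∫ x in (0:ℝ)..1, (1 / l₀) * ((G x + x * Gd x)
              + (⟪v x, v x⟫ + 2 * x * ⟪w x, v x⟫) - (⟪w x, u x⟫ + ⟪v x, v x⟫)) := by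
            apply intervalIntegral.integral_congr
            intro x hx
            exact hpt x (by rwa [uIcc_of_le zero_le_one] at hx)
        _ = (1 / l₀) * ∫ x in (0:ℝ)..1, ((G x + x * Gd x)
              + (⟪v x, v x⟫ + 2 * x * ⟪w x, v x⟫) - (⟪w x, u x⟫ + ⟪v x, v x⟫)) :=
            intervalIntegral.integral_const_mul _ _
        _ = (1 / l₀) * (((∫ x in (0:ℝ)..1, (G x + x * Gd x))
              + ∫ x in (0:ℝ)..1, (⟪v x, v x⟫ + 2 * x * ⟪w x, v x⟫))
              - ∫ x in (0:ℝ)..1, (⟪w x, u x⟫ + ⟪v x, v x⟫)) := by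
            rw [intervalIntegral.integral_sub (hiB.add hiC) hiA,
              intervalIntegral.integral_add hiB hiC]
        _ = (1 / l₀) * ‖v 1‖ ^ 2 := by
            rw [hintA, hintB, hintC, real_inner_self_eq_norm_sq]
            ring
    have hfinal := key.2
    rwa [hval] at hfinal
  · -- hF_meas
    filter_upwards [Filter.eventually_mem_set.mpr (Metric.ball_mem_nhds l₀ hεpos)] with l hl
    have hlI : l ∈ Icc (0:ℝ) 1 := Ioo_subset_Icc_self (hball hl)
    exact ((hFcont l hlI).mono hIsub).aestronglyMeasurable measurableSet_uIoc
  · -- hF_int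
    apply ContinuousOn.intervalIntegrable
    rw [uIcc_of_le zero_le_one]
    exact hFcont l₀ hl₀I
  · -- hF'_meas
    exact (hF'cont.mono hIsub).aestronglyMeasurable measurableSet_uIoc
  · -- h_bound
    apply Filter.Eventually.of_forall
    intro x hx l hl
    have hxI : x ∈ Icc (0:ℝ) 1 := hIsub hx
    have hlO : l ∈ Ioo (0:ℝ) 1 := hball hl
    have hlxI : l * x ∈ Icc (0:ℝ) 1 :=
      ⟨mul_nonneg hlO.1.le hxI.1, mul_le_one₀ hlO.2.le hxI.1 hxI.2⟩
    have hb1 : |⟪S (l * x) (u x), u x⟫| ≤ C₁ * C₃ ^ 2 := by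
      refine (abs_real_inner_le_norm _ _).trans ?_
      have h1 : ‖S (l * x) (u x)‖ ≤ C₁ * C₃ :=
        ((S (l * x)).le_opNorm (u x)).trans
          (mul_le_mul (hC₁ _ hlxI) (hC₃ x hxI) (norm_nonneg _) hC₁0)
      have h2 : ‖u x‖ ≤ C₃ := hC₃ x hxI
      nlinarith [norm_nonneg (S (l * x) (u x)), norm_nonneg (u x)]
    have hb2 : |⟪Sd (l * x) (u x), u x⟫| ≤ C₂ * C₃ ^ 2 := by
      refine (abs_real_inner_le_norm _ _).trans ?_
      have h1 : ‖Sd (l * x) (u x)‖ ≤ C₂ * C₃ :=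
        ((Sd (l * x)).le_opNorm (u x)).trans
          (mul_le_mul (hC₂ _ hlxI) (hC₃ x hxI) (norm_nonneg _) hC₂0)
      have h2 : ‖u x‖ ≤ C₃ := hC₃ x hxI
      nlinarith [norm_nonneg (Sd (l * x) (u x)), norm_nonneg (u x)]
    rw [Real.norm_eq_abs]
    have a1 : |2 * l * ⟪S (l * x) (u x), u x⟫| ≤ 2 * (C₁ * C₃ ^ 2) := by
      rw [mul_assoc, abs_mul, abs_two]
      have := aux_bound_cfnd hlO.1.le hlO.2.le hb1
      linarith
    have a2 : |l ^ 2 * x * ⟪Sd (l * x) (u x), u x⟫| ≤ C₂ * C₃ ^ 2 := by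
      have hc0 : 0 ≤ l ^ 2 * x := mul_nonneg (sq_nonneg l) hxI.1
      have hc1 : l ^ 2 * x ≤ 1 := by nlinarith [hlO.1, hlO.2, hxI.2]
      have := aux_bound_cfnd hc0 hc1 hb2
      rwa [mul_assoc] at this ⊢
    calc |2 * l * ⟪S (l * x) (u x), u x⟫ + l ^ 2 * x * ⟪Sd (l * x) (u x), u x⟫|
        ≤ |2 * l * ⟪S (l * x) (u x), u x⟫| + |l ^ 2 * x * ⟪Sd (l * x) (u x), u x⟫| := abs_add_le _ _
      _ ≤ 2 * (C₁ * C₃ ^ 2) + C₂ * C₃ ^ 2 := add_le_add a1 a2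
      _ = 2 * C₁ * C₃ ^ 2 + C₂ * C₃ ^ 2 := by ring
  · -- bound integrable
    exact intervalIntegrable_const
  · -- h_diff
    apply Filter.Eventually.of_forall
    intro x hx l hl
    have hxIoc : x ∈ Ioc (0:ℝ) 1 := by rwa [uIoc_of_le zero_le_one] at hx
    have hlO : l ∈ Ioo (0:ℝ) 1 := hball hl
    have hlx : l * x ∈ Ioo (0:ℝ) 1 :=
      ⟨mul_pos hlO.1 hxIoc.1, lt_of_le_of_lt (mul_le_of_le_one_right hlO.1.le hxIoc.2) hlO.2⟩
    have hDmul : HasDerivAt (fun y : ℝ => y * x) x l := hasDerivAt_mul_const x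
    have hDSl : HasDerivAt (fun y : ℝ => S (y * x)) (x • Sd (l * x)) l := by
      have h := HasDerivAt.scomp (x := l) (hDS _ hlx) hDmul
      exact h
    have happ : HasDerivAt (fun y : ℝ => S (y * x) (u x))
        ((x • Sd (l * x)) (u x) + S (l * x) 0) l :=
      hDSl.clm_apply (hasDerivAt_const l (u x))
    have hinner : HasDerivAt (fun y : ℝ => ⟪S (y * x) (u x), u x⟫)
        (⟪S (l * x) (u x), (0 : EuclideanSpace ℝ (Fin n))⟫
          + ⟪(x • Sd (l * x)) (u x) + S (l * x) 0, u x⟫) l :=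
      happ.inner ℝ (hasDerivAt_const l (u x))
    have hsq : HasDerivAt (fun y : ℝ => y ^ 2) (2 * l) l := by
      simpa using hasDerivAt_pow 2 l
    have := hsq.mul hinner
    refine this.congr_deriv ?_
    simp only [inner_zero_right, map_zero, add_zero, inner_zero_left,
      ContinuousLinearMap.coe_smul', Pi.smul_apply, real_inner_smul_left, zero_add]
    ring
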